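/- Let V be a finite-dimensional real vector space, η a nondegenerate symmetric bilinear form on V, and u an endomorphism of V which is self-adjoint with respect to η and all of whose (real) eigenvalues are positive. Then the symmetric bilinear form (x, y) ↦ η(x, u y) is nondegenerate and has the same signature as η. -/

import Mathlib

open Module

/-- The positive index of inertia: the maximal dimension of a subspace on which the
bilinear form is positive definite. -/
noncomputable def posIndex {V : Type*} [AddCommGroup V] [Module ℝ V]
    (B : V →ₗ[ℝ] V →ₗ[ℝ] ℝ) : ℕ :=
  sSup {n : ℕ | ∃ W : Submodule ℝ V, Module.finrank ℝ W = n ∧ ∀ x ∈ W, x ≠ 0 → 0 < B x x}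

/-- The negative index of inertia: the maximal dimension of a subspace on which the
bilinear form is negative definite. -/
noncomputable def negIndex {V : Type*} [AddCommGroup V] [Module ℝ V]
    (B : V →ₗ[ℝ] V →ₗ[ℝ] ℝ) : ℕ :=
  sSup {n : ℕ | ∃ W : Submodule ℝ V, Module.finrank ℝ W = n ∧ ∀ x ∈ W, x ≠ 0 → B x x < 0}

/-- The signature `(s₊, s₋)` of a bilinear form. -/
noncomputable def signature {V : Type*} [AddCommGroup V] [Module ℝ V]
    (B : V →ₗ[ℝ] V →ₗ[ℝ] ℝ) : ℕ × ℕ :=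
  (posIndex B, negIndex B)

section Aux
open Polynomial

lemma irred_real_natDegree_le_two (q : ℝ[X]) (hq : Irreducible q) : q.natDegree ≤ 2 := by
  have hq0 : q ≠ 0 := hq.ne_zero
  have hdeg : 0 < q.natDegree := hq.natDegree_pos
  obtain ⟨z, hz⟩ := IsAlgClosed.exists_root (q.map (algebraMap ℝ ℂ)) (by
    rw [degree_map]; intro h; rw [degree_eq_natDegree hq0] at h; exact hdeg.ne' (by exact_mod_cast h))
  have haev : (aeval z) q = 0 := by
    rw [aeval_def, eval₂_eq_eval_map]; exact hz
  have hint : IsIntegral ℝ z := Algebra.IsIntegral.isIntegral z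
  obtain ⟨c, hc⟩ := minpoly.dvd ℝ z haev
  have hmu : ¬ IsUnit (minpoly ℝ z) := by
    have := minpoly.natDegree_pos hint
    intro h
    have := natDegree_eq_zero_of_isUnit h
    omega
  rcases hq.isUnit_or_isUnit hc with h | h
  · exact absurd h hmu
  · have : q.natDegree = (minpoly ℝ z).natDegree := by
      rw [hc, natDegree_mul (minpoly.ne_zero hint) (fun h0 => by simp [h0] at h),
        natDegree_eq_zero_of_isUnit h, add_zero]
    rw [this]
    calc (minpoly ℝ z).natDegree ≤ Module.finrank ℝ ℂ := minpoly.natDegree_le z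
    _ = 2 := Complex.finrank_real_complex

lemma sqrtmod_deg1 (q : ℝ[X]) (hm : q.Monic) (hd : q.natDegree = 1)
    (hroot : ∀ x : ℝ, q.IsRoot x → 0 < x) : ∃ p : ℝ[X], q ∣ p ^ 2 - X := by
  set a := q.coeff 0 with ha
  have hq : q = X + C a := by
    have h := eq_X_add_C_of_natDegree_le_one (hd.le)
    rwa [← hd, hm.coeff_natDegree, C_1, one_mul] at h
  have hr : q.IsRoot (-a) := by rw [IsRoot, hq]; simp
  have hpos : 0 < -a := hroot _ hr
  refine ⟨C (Real.sqrt (-a)), -1, ?_⟩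
  rw [← C_pow, Real.sq_sqrt hpos.le, hq, map_neg]
  ring

lemma sqrtmod_deg2 (q : ℝ[X]) (hm : q.Monic) (hd : q.natDegree = 2)
    (hirr : Irreducible q) : ∃ p : ℝ[X], q ∣ p ^ 2 - X := by
  set b := q.coeff 1 with hb
  set c := q.coeff 0 with hc
  -- representation q = X^2 + C b * X + C c
  have hsub : (q - X ^ 2).natDegree ≤ 1 := by
    apply natDegree_le_iff_coeff_eq_zero.mpr
    intro m hmgt
    rw [coeff_sub, coeff_X_pow]
    rcases eq_or_lt_of_le (Nat.succ_le_of_lt hmgt) with h | h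
    · rw [← h, if_pos rfl]
      show q.coeff 2 - 1 = 0
      rw [← hd, hm.coeff_natDegree]
      ring
    · rw [coeff_eq_zero_of_natDegree_lt (by omega), if_neg (by omega)]
      ring
  have hq : q = X ^ 2 + C b * X + C c := by
    have h := eq_X_add_C_of_natDegree_le_one hsub
    have h1 : (q - X ^ 2).coeff 1 = b := by
      rw [coeff_sub, coeff_X_pow, if_neg (by omega), ← hb]; ring
    have h0 : (q - X ^ 2).coeff 0 = c := by
      rw [coeff_sub, coeff_X_pow, if_neg (by omega), ← hc]; ring
    rw [h1, h0] at h
    linear_combination (h : q - X ^ 2 = C b * X + C c)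
  -- no real roots
  have hnoroot : ∀ x : ℝ, ¬ q.IsRoot x := by
    intro x hx
    have hdvd : (X - C x) ∣ q := dvd_iff_isRoot.mpr hx
    obtain ⟨r, hr⟩ := hdvd
    rcases hirr.isUnit_or_isUnit hr with h | h
    · exact (not_isUnit_X_sub_C x) h
    · have hr0 : r ≠ 0 := fun h0 => by simp [h0] at hr; exact (by simp [hr] at hd)
      have : q.natDegree = 1 := by
        rw [hr, natDegree_mul (X_sub_C_ne_zero x) hr0, natDegree_X_sub_C,
          natDegree_eq_zero_of_isUnit h]
      omega
  -- discriminant negative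
  have hdisc : b ^ 2 - 4 * c < 0 := by
    by_contra hge
    push_neg at hge
    set d := Real.sqrt (b ^ 2 - 4 * c) with hdd
    have hd2 : d ^ 2 = b ^ 2 - 4 * c := Real.sq_sqrt (by linarith)
    apply hnoroot ((-b + d) / 2)
    rw [IsRoot, hq]
    simp only [eval_add, eval_mul, eval_pow, eval_X, eval_C]
    nlinarith [hd2]
  have hcpos : 0 < c := by nlinarith
  set γ := Real.sqrt c with hγ
  have hγ2 : γ ^ 2 = c := Real.sq_sqrt hcpos.le
  have hγpos : 0 < γ := Real.sqrt_pos.mpr hcpos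
  have hδpos : 0 < 2 * γ - b := by nlinarith
  set δ := 2 * γ - b with hδ
  set α := (Real.sqrt δ)⁻¹ with hα
  have hα2 : α ^ 2 = δ⁻¹ := by
    rw [hα, inv_pow, Real.sq_sqrt hδpos.le]
  have key1 : 2 * α * (α * γ) - 1 = α ^ 2 * b := by
    have : α ^ 2 * δ = 1 := by rw [hα2]; field_simp
    nlinarith [this]
  have key2 : (α * γ) ^ 2 = α ^ 2 * c := by rw [mul_pow, hγ2]
  refine ⟨C α * X + C (α * γ), C (α ^ 2), ?_⟩
  rw [hq]
  have hC1 : C (2 * α * (α * γ) - 1) = C (α ^ 2 * b) := by rw [key1]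
  have hC2 : C ((α * γ) ^ 2) = C (α ^ 2 * c) := by rw [key2]
  simp only [map_sub, map_mul, map_pow, map_one, map_ofNat] at hC1 hC2
  simp only [map_mul, map_pow]
  linear_combination (X : ℝ[X]) * hC1 + hC2

lemma sqrtmod_pow (q : ℝ[X]) (p₀ : ℝ[X]) (h0 : q ∣ p₀ ^ 2 - X) (hcop : IsCoprime p₀ q) :
    ∀ n : ℕ, ∃ p : ℝ[X], q ^ n ∣ p ^ 2 - X ∧ IsCoprime p q := by
  have hunit2 : IsUnit (2 : ℝ[X]) := by
    have h := (isUnit_iff_ne_zero.mpr (two_ne_zero (α := ℝ))).map C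
    rwa [map_ofNat] at h
  intro n
  induction n with
  | zero => exact ⟨p₀, by simp, hcop⟩
  | succ n ih =>
    rcases n with _ | n
    · exact ⟨p₀, by simpa using h0, hcop⟩
    obtain ⟨p, hdvd, hp⟩ := ih
    have hcop2 : IsCoprime (2 * p) (q ^ (n + 2)) :=
      (isCoprime_mul_unit_left_left hunit2 p _).mpr (hp.pow_right)
    obtain ⟨a, b', hab⟩ := hcop2
    refine ⟨p + a * (X - p ^ 2), ?_, ?_⟩
    · have key : (p + a * (X - p ^ 2)) ^ 2 - X
          = (p ^ 2 - X) * (b' * q ^ (n + 2)) + a ^ 2 * (p ^ 2 - X) ^ 2 := by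
        have h1 : b' * q ^ (n + 2) = 1 - a * (2 * p) := by linear_combination hab
        rw [h1]; ring
      rw [key]
      refine dvd_add (Dvd.dvd.mul_left (dvd_mul_left _ _) _) ?_
      calc q ^ (n + 2) ∣ q ^ (2 * (n + 1)) := pow_dvd_pow q (by omega)
        _ = (q ^ (n + 1)) ^ 2 := by rw [← pow_mul, Nat.mul_comm]
        _ ∣ (p ^ 2 - X) ^ 2 := pow_dvd_pow_of_dvd hdvd 2
        _ ∣ a ^ 2 * (p ^ 2 - X) ^ 2 := dvd_mul_left _ _
    · obtain ⟨r, hr⟩ := (dvd_pow_self q (Nat.succ_ne_zero n)).trans hdvd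
      have hXp : X - p ^ 2 = q * (-r) := by rw [← neg_sub (p^2) X, hr]; ring
      rw [hXp]
      have := hp.add_mul_right_left (-r * a)
      convert this using 2
      rfl
      ring

lemma crt_combine {a b p₁ p₂ : ℝ[X]} (hab : IsCoprime a b)
    (h1 : a ∣ p₁ ^ 2 - X) (h2 : b ∣ p₂ ^ 2 - X) : ∃ p : ℝ[X], a * b ∣ p ^ 2 - X := by
  obtain ⟨u, v, huv⟩ := id hab
  refine ⟨p₂ * u * a + p₁ * v * b, hab.mul_dvd ?_ ?_⟩
  · have hd : a ∣ (p₂ * u * a + p₁ * v * b) - p₁ := by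
      have : (p₂ * u * a + p₁ * v * b) - p₁ = (p₂ - p₁) * u * a := by
        linear_combination (p₁ : ℝ[X]) * huv
      rw [this]; exact Dvd.intro_left _ rfl
    have : (p₂ * u * a + p₁ * v * b) ^ 2 - X
        = ((p₂ * u * a + p₁ * v * b) - p₁) * ((p₂ * u * a + p₁ * v * b) + p₁) + (p₁ ^ 2 - X) := by
      ring
    rw [this]
    exact dvd_add (hd.mul_right _) h1
  · have hd : b ∣ (p₂ * u * a + p₁ * v * b) - p₂ := by
      have : (p₂ * u * a + p₁ * v * b) - p₂ = (p₁ - p₂) * v * b := by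
        linear_combination (p₂ : ℝ[X]) * huv
      rw [this]; exact Dvd.intro_left _ rfl
    have : (p₂ * u * a + p₁ * v * b) ^ 2 - X
        = ((p₂ * u * a + p₁ * v * b) - p₂) * ((p₂ * u * a + p₁ * v * b) + p₂) + (p₂ ^ 2 - X) := by
      ring
    rw [this]
    exact dvd_add (hd.mul_right _) h2

lemma sqrt_combine (S : Finset ℝ[X]) (e : ℝ[X] → ℕ)
    (hprime : ∀ q ∈ S, Prime q)
    (hpair : (S : Set ℝ[X]).Pairwise IsCoprime)
    (hbase : ∀ q ∈ S, ∃ p : ℝ[X], q ^ (e q) ∣ p ^ 2 - X) :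
    ∃ p : ℝ[X], (∏ q ∈ S, q ^ (e q)) ∣ p ^ 2 - X := by
  classical
  induction S using Finset.induction_on with
  | empty => exact ⟨0, by simp⟩
  | @insert q S' hq hrec =>
    obtain ⟨p₁, hp₁⟩ := hbase q (Finset.mem_insert_self q S')
    obtain ⟨p₂, hp₂⟩ := hrec (fun r hr => hprime r (Finset.mem_insert_of_mem hr))
      (hpair.mono (Finset.coe_subset.mpr (Finset.subset_insert q S')))
      (fun r hr => hbase r (Finset.mem_insert_of_mem hr))
    have hcop : IsCoprime (q ^ (e q)) (∏ r ∈ S', r ^ (e r)) := by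
      apply IsCoprime.pow_left
      apply IsCoprime.prod_right
      intro r hr
      apply IsCoprime.pow_right
      exact hpair (by simp) (by simp [hr]) (fun h => hq (h ▸ hr))
    rw [Finset.prod_insert hq]
    exact crt_combine hcop hp₁ hp₂

lemma sqrtmod (m : ℝ[X]) (hm : m ≠ 0) (hroot : ∀ x : ℝ, m.IsRoot x → 0 < x) :
    ∃ p : ℝ[X], m ∣ p ^ 2 - X := by
  classical
  set F := UniqueFactorizationMonoid.normalizedFactors m with hF
  have hassoc : Associated F.prod m := UniqueFactorizationMonoid.prod_normalizedFactors hm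
  -- basic facts about members
  have hmem : ∀ q ∈ F.toFinset, Prime q ∧ Monic q ∧ (∀ x : ℝ, q.IsRoot x → 0 < x) := by
    intro q hqm
    rw [Multiset.mem_toFinset] at hqm
    have hprime : Prime q := UniqueFactorizationMonoid.prime_of_normalized_factor q hqm
    have hnorm : normalize q = q := UniqueFactorizationMonoid.normalize_normalized_factor q hqm
    have hq0 : q ≠ 0 := hprime.ne_zero
    have hmonic : Monic q := by
      have := monic_normalize (p := q) hq0
      rwa [hnorm] at this
    refine ⟨hprime, hmonic, ?_⟩
    intro x hx
    apply hroot x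
    obtain ⟨t, ht⟩ := UniqueFactorizationMonoid.dvd_of_mem_normalizedFactors hqm
    rw [IsRoot, ht, eval_mul, hx.eq_zero, zero_mul]
  -- base square roots mod q and coprimality, then powers
  have hbase : ∀ q ∈ F.toFinset, ∃ p : ℝ[X], q ^ (F.count q) ∣ p ^ 2 - X := by
    intro q hqm
    obtain ⟨hprime, hmonic, hqroot⟩ := hmem q hqm
    have hdeg := irred_real_natDegree_le_two q hprime.irreducible
    have hdegpos := hprime.irreducible.natDegree_pos
    have hqnX : ¬ q ∣ X := by
      intro hdvd
      have hassX : Associated q X :=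
        hprime.irreducible.associated_of_dvd irreducible_X hdvd
      have : q = X := eq_of_monic_of_associated hmonic monic_X hassX
      have h0 : q.IsRoot 0 := by rw [this]; simp
      exact absurd (hqroot 0 h0) (lt_irrefl 0)
    obtain ⟨p₀, hp₀⟩ : ∃ p : ℝ[X], q ∣ p ^ 2 - X := by
      interval_cases h : q.natDegree
      · exact sqrtmod_deg1 q hmonic h hqroot
      · exact sqrtmod_deg2 q hmonic h hprime.irreducible
    have hcop : IsCoprime p₀ q := by
      rw [isCoprime_comm, hprime.irreducible.coprime_iff_not_dvd]
      intro hdvd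
      apply hqnX
      have hX : (X : ℝ[X]) = p₀ ^ 2 - (p₀ ^ 2 - X) := by ring
      rw [hX]
      exact dvd_sub (dvd_pow hdvd two_ne_zero) hp₀
    obtain ⟨p, hp, _⟩ := sqrtmod_pow q p₀ hp₀ hcop (F.count q)
    exact ⟨p, hp⟩
  have hpair : ((F.toFinset : Finset ℝ[X]) : Set ℝ[X]).Pairwise IsCoprime := by
    intro q hq r hr hne
    simp only [Finset.coe_mem, Finset.mem_coe] at hq hr
    obtain ⟨hpq, hmq, -⟩ := hmem q hq
    obtain ⟨hpr, hmr, -⟩ := hmem r hr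
    rw [hpq.irreducible.coprime_iff_not_dvd]
    intro hdvd
    apply hne
    exact eq_of_monic_of_associated hmq hmr
      (hpq.irreducible.associated_of_dvd hpr.irreducible hdvd)
  obtain ⟨p, hp⟩ := sqrt_combine F.toFinset (fun q => F.count q)
    (fun q hq => (hmem q hq).1) hpair hbase
  refine ⟨p, dvd_trans ?_ hp⟩
  have : F.prod = ∏ q ∈ F.toFinset, q ^ (F.count q) := Finset.prod_multiset_count F
  rw [← this]
  exact hassoc.symm.dvd

lemma index_set_eq {V : Type*} [AddCommGroup V] [Module ℝ V]
    (B η : V →ₗ[ℝ] V →ₗ[ℝ] ℝ) (e : V ≃ₗ[ℝ] V)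
    (h : ∀ x, B x x = η (e x) (e x)) (P : ℝ → Prop) :
    {n : ℕ | ∃ W : Submodule ℝ V, Module.finrank ℝ W = n ∧ ∀ x ∈ W, x ≠ 0 → P (B x x)} =
    {n : ℕ | ∃ W : Submodule ℝ V, Module.finrank ℝ W = n ∧ ∀ x ∈ W, x ≠ 0 → P (η x x)} := by
  ext n
  simp only [Set.mem_setOf_eq]
  constructor
  · rintro ⟨W, rfl, hW⟩
    refine ⟨W.map e.toLinearMap, LinearEquiv.finrank_map_eq e W, ?_⟩
    intro x hx hx0
    obtain ⟨w, hw, rfl⟩ := Submodule.mem_map.mp hx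
    have hw0 : w ≠ 0 := fun h0 => hx0 (by simp [h0])
    have := hW w hw hw0
    rwa [h w] at this
  · rintro ⟨W, rfl, hW⟩
    refine ⟨W.map e.symm.toLinearMap, LinearEquiv.finrank_map_eq e.symm W, ?_⟩
    intro x hx hx0
    obtain ⟨w, hw, rfl⟩ := Submodule.mem_map.mp hx
    have hw0 : w ≠ 0 := fun h0 => hx0 (by simp [h0])
    have := hW w hw hw0
    rw [h]
    simpa using this

end Aux

theorem stmt_0 {V : Type*} [AddCommGroup V] [Module ℝ V] [FiniteDimensional ℝ V]
    (η : V →ₗ[ℝ] V →ₗ[ℝ] ℝ)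
    (hsymm : ∀ x y, η x y = η y x)
    (hnd : ∀ x : V, (∀ y : V, η x y = 0) → x = 0)
    (u : V →ₗ[ℝ] V)
    (hsa : ∀ x y, η (u x) y = η x (u y))
    (heig : ∀ c : ℝ, Module.End.HasEigenvalue u c → 0 < c) :
    (∀ x : V, (∀ y : V, η x (u y) = 0) → x = 0) ∧
      signature (η.compl₂ u) = signature η := by
  -- u is injective, hence bijective
  have hu_inj : Function.Injective u := by
    rw [← LinearMap.ker_eq_bot]
    by_contra hk
    obtain ⟨x, hx, hx0⟩ := Submodule.exists_mem_ne_zero_of_ne_bot hk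
    have hev : Module.End.HasEigenvalue u 0 := by
      apply Module.End.hasEigenvalue_of_hasEigenvector (x := x)
      refine ⟨?_, hx0⟩
      rw [Module.End.mem_eigenspace_iff, zero_smul]
      exact hx
    exact absurd (heig 0 hev) (lt_irrefl 0)
  have hu_surj : Function.Surjective u := LinearMap.injective_iff_surjective.mp hu_inj
  -- minpoly and polynomial square root
  have hint : IsIntegral ℝ u := Algebra.IsIntegral.isIntegral u
  have hm0 : minpoly ℝ u ≠ 0 := minpoly.ne_zero hint
  have hroots : ∀ x : ℝ, (minpoly ℝ u).IsRoot x → 0 < x := fun x hx =>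
    heig x (Module.End.hasEigenvalue_iff_isRoot.mpr hx)
  obtain ⟨p, hpm⟩ := sqrtmod (minpoly ℝ u) hm0 hroots
  set s : V →ₗ[ℝ] V := Polynomial.aeval u p with hs
  have hss : s * s = u := by
    obtain ⟨c, hc⟩ := hpm
    have h0 : Polynomial.aeval u (p ^ 2 - Polynomial.X) = 0 := by
      rw [hc, map_mul, minpoly.aeval, zero_mul]
    have := sub_eq_zero.mp (by rwa [map_sub, map_pow, Polynomial.aeval_X] at h0)
    rw [hs, ← pow_two, this]
  -- self-adjointness of polynomials in u
  have hpow : ∀ (n : ℕ) (x y : V), η ((u ^ n) x) y = η x ((u ^ n) y) := by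
    intro n
    induction n with
    | zero => intro x y; simp
    | succ n ih =>
      intro x y
      have e1 : (u ^ (n + 1)) x = (u ^ n) (u x) := by rw [pow_succ]; rfl
      have e2 : (u ^ (n + 1)) y = u ((u ^ n) y) := by rw [pow_succ']; rfl
      rw [e1, e2, ih, hsa]
  have hsa_poly : ∀ r : Polynomial ℝ, ∀ x y,
      η ((Polynomial.aeval u r) x) y = η x ((Polynomial.aeval u r) y) := by
    intro r
    induction r using Polynomial.induction_on' with
    | add f g hf hg =>
      intro x y
      simp only [map_add, LinearMap.add_apply, map_add, LinearMap.add_apply, hf, hg]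
    | monomial n a =>
      intro x y
      simp only [Polynomial.aeval_monomial, Module.End.mul_apply, Module.algebraMap_end_apply,
        LinearMap.map_smul, LinearMap.smul_apply, map_smul, smul_eq_mul]
      rw [hpow]
  have hsa_s : ∀ x y, η (s x) y = η x (s y) := fun x y => hsa_poly p x y
  -- s is bijective
  have hs_inj : Function.Injective s := by
    rw [← LinearMap.ker_eq_bot, Submodule.eq_bot_iff]
    intro x hx
    rw [LinearMap.mem_ker] at hx
    apply hu_inj
    rw [map_zero, ← hss, Module.End.mul_apply, hx, map_zero]
  have hs_bij : Function.Bijective s := ⟨hs_inj, LinearMap.injective_iff_surjective.mp hs_inj⟩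
  set e : V ≃ₗ[ℝ] V := LinearEquiv.ofBijective s hs_bij with he
  have hB : ∀ x, (η.compl₂ u) x x = η (e x) (e x) := by
    intro x
    have hex : e x = s x := rfl
    rw [LinearMap.compl₂_apply, hex, ← hss, Module.End.mul_apply]
    exact (hsa_s x (s x)).symm
  constructor
  · intro x hx
    apply hnd
    intro y
    obtain ⟨z, rfl⟩ := hu_surj y
    exact hx z
  · have h1 := index_set_eq (η.compl₂ u) η e hB (fun t => 0 < t)
    have h2 := index_set_eq (η.compl₂ u) η e hB (fun t => t < 0)
    rw [signature, signature, posIndex, posIndex, negIndex, negIndex, h1, h2]
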